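/- Let λ ∈ Q^-, 𝔭 ∈ 𝒫(−λ), i ∈ I and w ∈ W with ℓ(ws_i) = ℓ(w) + 1. Then m(φ_i(𝔭), w) = m(𝔭, ws_i) + 1. -/

import Mathlib

open scoped Classical

noncomputable section

/-- An axiomatization of the root datum of a Kac--Moody algebra `𝔤` associated to an
`n × n` generalized Cartan matrix, realized on the lattice `V` of integral weights
(the subgroup of `𝔥*` spanned by the weight lattice `P`, the root lattice `Q` and a
Weyl vector).  `alpha i` are the simple roots, `pair i v = v(α_i^∨)` is the pairing
with the simple coroots, and `mult β = dim 𝔤_β` is the root multiplicity function.  -/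
structure KacMoody (n : ℕ) (V : Type) [AddCommGroup V] where
  /-- the simple roots `α_i` -/
  alpha : Fin n → V
  /-- the pairing with the simple coroots, `pair i v = v(α_i^∨)` -/
  pair : Fin n → V →+ ℤ
  /-- the diagonal entries of the generalized Cartan matrix `a_{ij} = pair i (alpha j)` are `2` -/
  pair_self : ∀ i, pair i (alpha i) = 2
  /-- the off-diagonal entries of the generalized Cartan matrix are nonpositive -/
  pair_offdiag : ∀ i j, i ≠ j → pair i (alpha j) ≤ 0
  /-- `a_{ij} = 0 → a_{ji} = 0` -/
  pair_zero_iff : ∀ i j, pair i (alpha j) = 0 → pair j (alpha i) = 0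
  /-- the simple roots are linearly independent -/
  indep : ∀ c : Fin n → ℤ, ∑ i, c i • alpha i = 0 → ∀ i, c i = 0
  /-- root multiplicities: `mult β = dim 𝔤_β`; `β ≠ 0` is a root iff `mult β ≠ 0` -/
  mult : V → ℕ
  /-- simple roots are roots of multiplicity one -/
  mult_simple : ∀ i, mult (alpha i) = 1
  /-- every root is positive or negative -/
  root_pm : ∀ β : V, mult β ≠ 0 → β ≠ 0 →
    (∃ c : Fin n → ℕ, β = ∑ i, c i • alpha i) ∨ (∃ c : Fin n → ℕ, β = -∑ i, c i • alpha i)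
  /-- multiplicities are invariant under the simple reflections (hence under the Weyl group) -/
  mult_reflect : ∀ (i) (v : V), mult (v - pair i v • alpha i) = mult v
  /-- a given `μ` admits only finitely many partitions into positive roots (counted
  with multiplicity); this is automatic for genuine Kac--Moody root systems -/
  part_finite : ∀ μ : V,
    {p : Finset (V × ℕ) |
      (∀ x ∈ p, (mult x.1 ≠ 0 ∧ x.1 ≠ 0 ∧ x.1 ∈ {v : V | ∃ c : Fin n → ℕ,
          v = ∑ i, c i • alpha i}) ∧ 1 ≤ x.2 ∧ x.2 ≤ mult x.1) ∧
        ∑ x ∈ p, x.1 = μ}.Finite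

/-- the multiplicative group structure on `AddAut A` (composition), as in older Mathlib -/
instance AddAut.groupOld (A : Type*) [Add A] : Group (AddAut A) where
  mul g h := AddEquiv.trans h g
  one := AddEquiv.refl _
  inv := AddEquiv.symm
  mul_assoc _ _ _ := rfl
  one_mul _ := rfl
  mul_one _ := rfl
  inv_mul_cancel e := by ext x; exact e.symm_apply_apply x

namespace KacMoody

variable {n : ℕ} {V : Type} [AddCommGroup V] (K : KacMoody n V)

/-- the positive root cone `Q⁺` (the `ℕ`-span of the simple roots) -/
def QP : Set V := {v | ∃ c : Fin n → ℕ, v = ∑ i, c i • K.alpha i}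

/-- `β` is a positive root of `𝔤` -/
def IsPosRoot (β : V) : Prop := K.mult β ≠ 0 ∧ β ≠ 0 ∧ β ∈ K.QP

/-- the underlying function of the simple reflection `s_i` -/
def sAux (i : Fin n) : V → V := fun v => v - K.pair i v • K.alpha i

lemma sAux_add (i : Fin n) (a b : V) : K.sAux i (a + b) = K.sAux i a + K.sAux i b := by
  simp only [sAux, map_add, add_smul]; abel

lemma sAux_invol (i : Fin n) : Function.Involutive (K.sAux i) := by
  intro v
  simp only [sAux, map_sub, map_zsmul, K.pair_self i, smul_eq_mul]
  have h2 : K.pair i v - K.pair i v * 2 = -(K.pair i v) := by ring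
  rw [h2, neg_smul, sub_neg_eq_add]
  abel

/-- the simple reflection `s_i`, as an automorphism of the weight lattice -/
def s (i : Fin n) : AddAut V :=
  { toFun := K.sAux i
    invFun := K.sAux i
    left_inv := K.sAux_invol i
    right_inv := K.sAux_invol i
    map_add' := K.sAux_add i }

/-- the Weyl group `W` of `𝔤`, realized as the subgroup of `Aut(𝔥*)` generated by the
simple reflections -/
def Wgrp : Subgroup (AddAut V) := Subgroup.closure (Set.range K.s)

/-- the length `ℓ(w)` of an element of the Weyl group: the minimal length of an
expression of `w` as a product of simple reflections -/
def len (w : AddAut V) : ℕ :=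
  sInf {k | ∃ l : List (Fin n), l.length = k ∧ (l.map K.s).prod = w}

/-- the set `P⁺` of dominant integral weights -/
def Pplus : Set V := {v | ∀ i, 0 ≤ K.pair i v}

/-- `β` is a real root: it is `W`-conjugate to a simple root -/
def IsRealRoot (β : V) : Prop := ∃ w ∈ K.Wgrp, ∃ i, w (K.alpha i) = β

/-- `β` is an imaginary root: a root that is not real -/
def IsImRoot (β : V) : Prop := K.mult β ≠ 0 ∧ β ≠ 0 ∧ ¬K.IsRealRoot β

/-- the cone `Q⁻_im` generated by the negative imaginary roots -/
def coneIm : Set V :=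
  (AddSubmonoid.closure {v : V | K.IsImRoot v ∧ -v ∈ K.QP} : AddSubmonoid V)

/-- the element of `Q⁺` with coordinates `c` in the basis of simple roots -/
def toV (c : Fin n →₀ ℕ) : V := ∑ i, c i • K.alpha i

/-- the coordinates of an element of `Q⁺` in the basis of simple roots -/
def coordOf (v : V) : Fin n →₀ ℕ :=
  if h : ∃ c : Fin n →₀ ℕ, K.toV c = v then h.choose else 0

/-- `p` is an admissible partition of `μ`: a finite subset of
`𝒫 = {(α, i) : α ∈ Φ⁺, 1 ≤ i ≤ mult α}` whose parts sum to `μ` -/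
def IsPart (μ : V) (p : Finset (V × ℕ)) : Prop :=
  (∀ x ∈ p, (K.mult x.1 ≠ 0 ∧ x.1 ≠ 0 ∧ x.1 ∈ K.QP) ∧ 1 ≤ x.2 ∧ x.2 ≤ K.mult x.1) ∧
    ∑ x ∈ p, x.1 = μ

lemma isPart_finite (μ : V) : {p : Finset (V × ℕ) | K.IsPart μ p}.Finite := K.part_finite μ

/-- the finite set `𝒫(μ)` of admissible partitions of `μ` -/
def partsFinset (μ : V) : Finset (Finset (V × ℕ)) := (K.isPart_finite μ).toFinset

/-- the Kim--Lee function `H(μ; q) = Σ_{𝔭 ∈ 𝒫(μ)} (-q)^{|𝔭|}`, i.e. the coefficient of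
`e^{-μ}` in `Π_{α ∈ Φ⁺} (1 - q e^{-α})^{mult α}` -/
def H (μ : V) : Polynomial ℤ := ∑ p ∈ K.partsFinset μ, (-Polynomial.X) ^ p.card

/-- the Weyl denominator `Π_{α ∈ Φ⁺} (1 - e^{-α})^{mult α}`, expanded as a formal sum;
the coefficient at `c` is the coefficient of `e^{-toV c}` -/
def den : MvPowerSeries (Fin n) ℤ :=
  fun c => ∑ p ∈ K.partsFinset (K.toV c), (-1 : ℤ) ^ p.card

/-- `ξ^λ = Σ_{w ∈ W} (-1)^{ℓ(w)} e^{w∘λ}` as a formal sum supported on `Q⁻`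
(for `λ ∈ Q'`); the coefficient at `c` is the coefficient of `e^{-toV c}` -/
def xiMv (ρ lam : V) : MvPowerSeries (Fin n) ℤ :=
  fun c => ∑ᶠ w ∈ {w : AddAut V | w ∈ K.Wgrp ∧ w (lam + ρ) - ρ = -K.toV c},
    (-1 : ℤ) ^ K.len w

/-- the Poincaré series `χ(q) = Σ_{w ∈ W} q^{ℓ(w)}` of the Weyl group -/
def chiPS : PowerSeries ℤ :=
  PowerSeries.mk fun k => (Nat.card {w : AddAut V | w ∈ K.Wgrp ∧ K.len w = k} : ℤ)

/-- the inversion set `Φ(w⁻¹) = {α ∈ Φ⁺ : wα < 0}` -/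
def Inversions (w : AddAut V) : Set V := {β | K.IsPosRoot β ∧ -(w β) ∈ K.QP}

/-- the number of inversions of `w`, counted with multiplicity -/
def NInv (w : AddAut V) : ℕ := ∑ᶠ β ∈ K.Inversions w, K.mult β

/-- a finite subset of `𝒫 = {(α, i) : α ∈ Φ⁺, 1 ≤ i ≤ mult α}` -/
def IsChoice (p : Finset (V × ℕ)) : Prop :=
  ∀ x ∈ p, K.IsPosRoot x.1 ∧ 1 ≤ x.2 ∧ x.2 ≤ K.mult x.1

/-- the formal sum expansion of `Δ^w`, the image of
`Δ = Π_{α ∈ Φ⁺} ((1 - q e^{-α})/(1 - e^{-α}))^{mult α}` under `w ∈ W`: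
`Δ^w = Π_{α ∈ Φ(w⁻¹)} ((q - e^{-α})/(1 - e^{-α})) ·
Π_{α ∈ Φ⁺ ∖ Φ(w⁻¹)} ((1 - q e^{-α})/(1 - e^{-α}))^{mult α}`, where numerators are
expanded by choosing a finite subset `pf.1` of `𝒫` and denominators by choosing a
finitely supported multiset `pf.2` on `𝒫`. -/
def deltaW (w : AddAut V) : MvPowerSeries (Fin n) (PowerSeries ℤ) :=
  fun c =>
    ∑ᶠ pf ∈ {pf : Finset (V × ℕ) × ((V × ℕ) →₀ ℕ) |
        K.IsChoice pf.1 ∧ (∀ x ∈ pf.2.support, K.IsPosRoot x.1 ∧ 1 ≤ x.2 ∧ x.2 ≤ K.mult x.1) ∧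
        (∑ x ∈ pf.1, x.1) + (pf.2.sum fun x k => k • x.1) = K.toV c},
      ((-1 : ℤ) ^ pf.1.card) •
        (PowerSeries.X : PowerSeries ℤ) ^
          (K.NInv w + (pf.1.filter fun x => x.1 ∉ K.Inversions w).card
            - (pf.1.filter fun x => x.1 ∈ K.Inversions w).card)

/-- the formal sum `ℳ(q) = Σ_{w ∈ W} Δ^w`, a formal sum supported on `Q⁻` with
coefficients in `ℤ[[q]]`; the coefficient at `c` is the coefficient of `e^{-toV c}` -/
def Mcal : MvPowerSeries (Fin n) (PowerSeries ℤ) :=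
  fun c => PowerSeries.mk fun m =>
    ∑ᶠ w ∈ {w : AddAut V | w ∈ K.Wgrp},
      PowerSeries.coeff m (MvPowerSeries.coeff c (K.deltaW w))

/-- `Q' = ⋂_{w ∈ W} w ∘ Q⁻`, where `∘` is the circle (dot) action `w ∘ λ = w(λ+ρ) - ρ` -/
def Qprime (ρ : V) : Set V := {v | ∀ w ∈ K.Wgrp, -(w (v + ρ) - ρ) ∈ K.QP}

/-- `ξ^λ = Σ_{w ∈ W} (-1)^{ℓ(w)} e^{w∘λ}` as a formal sum on all of `𝔥*`:
`xiFun ρ lam v` is the coefficient of `e^v` -/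
def xiFun (ρ lam : V) : V → ℤ :=
  fun v => ∑ᶠ w ∈ {w : AddAut V | w ∈ K.Wgrp ∧ w (lam + ρ) - ρ = v}, (-1 : ℤ) ^ K.len w

/-- the numerator `Σ_{w ∈ W} (-1)^{ℓ(w)} e^{w(λ+ρ)}` of `π^λ`, as a formal sum:
`numFun ρ lam v` is the coefficient of `e^v` -/
def numFun (ρ lam : V) : V → ℤ :=
  fun v => ∑ᶠ w ∈ {w : AddAut V | w ∈ K.Wgrp ∧ w (lam + ρ) = v}, (-1 : ℤ) ^ K.len w

/-- the map `φ_i : 𝒫(-λ) → 𝒫(-s_i ∘ λ)` on admissible partitions -/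
def phi (i : Fin n) (p : Finset (V × ℕ)) : Finset (V × ℕ) :=
  if ∃ x ∈ p, x.1 = K.alpha i then
    (p.filter fun x => x.1 ≠ K.alpha i).image fun x => (K.s i x.1, x.2)
  else insert (K.alpha i, 1) (p.image fun x => (K.s i x.1, x.2))

/-- `m(𝔭, w) = |𝔭| - 2 ⬝ #{(β, j) ∈ 𝔭 : wβ < 0}` -/
def mpw (w : AddAut V) (p : Finset (V × ℕ)) : ℤ :=
  (p.card : ℤ) - 2 * (p.filter fun x => -(w x.1) ∈ K.QP ∧ w x.1 ≠ 0).card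

/-- `|wβ|`: the positive root among `± wβ` -/
def wabs (w : AddAut V) (β : V) : V := if -(w β) ∈ K.QP then -(w β) else w β

/-- `Σ_{α ∈ Φ(w⁻¹)} mult α • (-wα)`, the forced monomial appearing when `w` acts on the
Weyl denominator -/
def invWt (w : AddAut V) : V := ∑ᶠ β ∈ K.Inversions w, K.mult β • (-(w β))

/-- the series part of the expansion of `w(Π_{α ∈ Φ⁺} (1 - e^{-α})^{mult α})`:
by the defining action `w(1 - e^{-α}) = 1 - e^{-wα}` if `wα > 0` and
`w(1 - e^{-α}) = (-e^{-wα})(1 - e^{wα})` if `wα < 0`, one has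
`w(Π_{α ∈ Φ⁺} (1 - e^{-α})^{mult α}) = (-1)^{NInv w} e^{invWt w} · wDen w`, where
`wDen w = Π_{α ∈ Φ⁺, (α,i) ∈ 𝒫} (1 - e^{-|wα|})`; the coefficient at `c` is the
coefficient of `e^{-toV c}` -/
def wDen (w : AddAut V) : MvPowerSeries (Fin n) ℤ :=
  fun c => ∑ᶠ p ∈ {p : Finset (V × ℕ) | K.IsChoice p ∧
      (∑ x ∈ p, K.wabs w x.1) = K.toV c},
    (-1 : ℤ) ^ p.card

/-- for a word `l = (i_1, …, i_ℓ)`, the root `s_{i_1} ⋯ s_{i_{k-1}} (α_{i_k})` -/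
def prefixRoot (l : List (Fin n)) (k : Fin l.length) : V :=
  ((l.take k).map K.s).prod (K.alpha (l.get k))

end KacMoody

namespace KacMoody

variable {n : ℕ} {V : Type} [AddCommGroup V] (K : KacMoody n V)


lemma s_apply (i : Fin n) (v : V) : K.s i v = v - K.pair i v • K.alpha i := rfl

lemma s_s (i : Fin n) (v : V) : K.s i (K.s i v) = v := K.sAux_invol i v

lemma mul_aut_apply (u v : AddAut V) (x : V) : (u * v) x = u (v x) := rfl

lemma one_aut_apply (x : V) : (1 : AddAut V) x = x := rfl

lemma s_mul_self (i : Fin n) : K.s i * K.s i = 1 := by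
  ext v; exact K.s_s i v

lemma s_mem : ∀ i, K.s i ∈ K.Wgrp := fun i =>
  Subgroup.subset_closure ⟨i, rfl⟩

lemma word_mem (l : List (Fin n)) : (l.map K.s).prod ∈ K.Wgrp := by
  induction l with
  | nil => exact one_mem _
  | cons a l ih =>
    simp only [List.map_cons, List.prod_cons]
    exact mul_mem (K.s_mem a) ih

lemma word_reverse (l : List (Fin n)) :
    ((l.reverse.map K.s)).prod = ((l.map K.s).prod)⁻¹ := by
  induction l with
  | nil => simp
  | cons a l ih =>
    simp only [List.reverse_cons, List.map_append, List.prod_append, List.map_cons,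
      List.prod_cons, List.map_nil, List.prod_nil, mul_one, ih, mul_inv_rev]
    rw [inv_eq_of_mul_eq_one_left (K.s_mul_self a)]

lemma exists_word {w : AddAut V} (hw : w ∈ K.Wgrp) :
    ∃ l : List (Fin n), (l.map K.s).prod = w := by
  induction hw using Subgroup.closure_induction with
  | mem x hx => obtain ⟨i, rfl⟩ := hx; exact ⟨[i], by simp⟩
  | one => exact ⟨[], by simp⟩
  | mul x y _ _ hx hy =>
    obtain ⟨l1, rfl⟩ := hx; obtain ⟨l2, rfl⟩ := hy
    exact ⟨l1 ++ l2, by simp⟩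
  | inv x _ hx =>
    obtain ⟨l, rfl⟩ := hx
    exact ⟨l.reverse, K.word_reverse l⟩

lemma len_le {w : AddAut V} (l : List (Fin n)) (h : (l.map K.s).prod = w) :
    K.len w ≤ l.length := Nat.sInf_le ⟨l, rfl, h⟩

lemma len_spec {w : AddAut V} (hw : w ∈ K.Wgrp) :
    ∃ l : List (Fin n), l.length = K.len w ∧ (l.map K.s).prod = w := by
  have hne : {k | ∃ l : List (Fin n), l.length = k ∧ (l.map K.s).prod = w}.Nonempty := by
    obtain ⟨l, hl⟩ := K.exists_word hw
    exact ⟨l.length, l, rfl, hl⟩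
  exact Nat.sInf_mem hne

lemma len_one : K.len 1 = 0 :=
  Nat.le_zero.mp (K.len_le [] (by simp))

lemma eq_one_of_len_zero {w : AddAut V} (hw : w ∈ K.Wgrp) (h : K.len w = 0) :
    w = 1 := by
  obtain ⟨l, hl, hp⟩ := K.len_spec hw
  rw [h] at hl
  rw [List.length_eq_zero_iff] at hl
  subst hl; simpa using hp.symm

lemma len_mul_le {w v : AddAut V} (hw : w ∈ K.Wgrp) (hv : v ∈ K.Wgrp) :
    K.len (w * v) ≤ K.len w + K.len v := by
  obtain ⟨l1, hl1, hp1⟩ := K.len_spec hw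
  obtain ⟨l2, hl2, hp2⟩ := K.len_spec hv
  have : ((l1 ++ l2).map K.s).prod = w * v := by simp [hp1, hp2]
  calc K.len (w * v) ≤ (l1 ++ l2).length := K.len_le _ this
    _ = K.len w + K.len v := by simp [hl1, hl2]

lemma len_le_len_mul_s_add_one {w : AddAut V} (hw : w ∈ K.Wgrp) (i : Fin n) :
    K.len w ≤ K.len (w * K.s i) + 1 := by
  have h1 : (w * K.s i) * K.s i = w := by
    rw [mul_assoc, K.s_mul_self, mul_one]
  calc K.len w = K.len ((w * K.s i) * K.s i) := by rw [h1]
    _ ≤ K.len (w * K.s i) + K.len (K.s i) :=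
        K.len_mul_le (mul_mem hw (K.s_mem i)) (K.s_mem i)
    _ ≤ K.len (w * K.s i) + 1 := by
        have : K.len (K.s i) ≤ 1 := K.len_le [i] (by simp)
        omega

-- QP lemmas

lemma mem_QP_iff (v : V) : v ∈ K.QP ↔ ∃ c : Fin n → ℕ, v = ∑ j, c j • K.alpha j :=
  Iff.rfl

lemma qp_zero : (0 : V) ∈ K.QP := ⟨0, by simp⟩

lemma qp_alpha (i : Fin n) : K.alpha i ∈ K.QP := by
  refine ⟨fun j => if j = i then 1 else 0, ?_⟩
  simp [ite_smul]

lemma qp_add {x y : V} (hx : x ∈ K.QP) (hy : y ∈ K.QP) : x + y ∈ K.QP := by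
  obtain ⟨c, rfl⟩ := hx; obtain ⟨d, rfl⟩ := hy
  exact ⟨c + d, by simp [add_smul, Finset.sum_add_distrib]⟩

lemma qp_nsmul (m : ℕ) {x : V} (hx : x ∈ K.QP) : m • x ∈ K.QP := by
  obtain ⟨c, rfl⟩ := hx
  refine ⟨fun j => m * c j, ?_⟩
  rw [Finset.smul_sum]
  simp [mul_smul]

lemma qp_zsmul {z : ℤ} (hz : 0 ≤ z) {x : V} (hx : x ∈ K.QP) : z • x ∈ K.QP := by
  obtain ⟨m, rfl⟩ := Int.eq_ofNat_of_zero_le hz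
  rw [natCast_zsmul]
  exact K.qp_nsmul m hx

lemma qp_combo {x y : V} (hx : x ∈ K.QP) (hy : y ∈ K.QP) {A B : ℤ}
    (hA : 0 ≤ A) (hB : 0 ≤ B) : A • x + B • y ∈ K.QP :=
  K.qp_add (K.qp_zsmul hA hx) (K.qp_zsmul hB hy)

lemma eq_zero_of_qp_neg_qp {x : V} (hx : x ∈ K.QP) (hnx : -x ∈ K.QP) : x = 0 := by
  obtain ⟨c, hc⟩ := hx; obtain ⟨d, hd⟩ := hnx
  have hsum : ∑ j, ((c j : ℤ) + (d j : ℤ)) • K.alpha j = 0 := by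
    have : ∑ j, ((c j : ℤ) + (d j : ℤ)) • K.alpha j
        = (∑ j, c j • K.alpha j) + ∑ j, d j • K.alpha j := by
      rw [← Finset.sum_add_distrib]
      refine Finset.sum_congr rfl fun j _ => ?_
      rw [add_smul, natCast_zsmul, natCast_zsmul]
    rw [this, ← hc, ← hd]
    simp
  have hall := K.indep _ hsum
  have hc0 : ∀ j, c j = 0 := by
    intro j
    have := hall j
    omega
  rw [hc]
  refine Finset.sum_eq_zero fun j _ => ?_
  rw [hc0 j, zero_smul]

lemma alpha_ne_zero (i : Fin n) : K.alpha i ≠ 0 := by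
  intro h
  have hsum : ∑ j, (if j = i then (1 : ℤ) else 0) • K.alpha j = 0 := by
    simp [ite_smul, Finset.sum_ite_eq', h]
  have := K.indep _ hsum i
  simp at this


end KacMoody

-- cseq: alternating products
namespace KacMoody

variable {n : ℕ} {V : Type} [AddCommGroup V] (K : KacMoody n V)

def cseq (x y : Fin n) : ℕ → AddAut V
  | 0 => 1
  | (r + 1) => (if Even r then K.s x else K.s y) * cseq x y r

lemma cseq_zero (x y : Fin n) : K.cseq x y 0 = 1 := rfl

lemma cseq_succ (x y : Fin n) (r : ℕ) :
    K.cseq x y (r + 1) = (if Even r then K.s x else K.s y) * K.cseq x y r := rfl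

lemma cseq_one (x y : Fin n) : K.cseq x y 1 = K.s x := by
  rw [cseq_succ, cseq_zero, mul_one, if_pos (Even.zero)]

lemma cseq_strip (x y : Fin n) : ∀ r, K.cseq x y (r + 1) = K.cseq y x r * K.s x := by
  intro r
  induction r with
  | zero => rw [cseq_one, cseq_zero, one_mul]
  | succ r ih =>
    rw [cseq_succ, ih, cseq_succ, mul_assoc]
    congr 1
    rcases Nat.even_or_odd r with he | ho
    · rw [if_neg (fun hc => (Nat.even_add_one.mp hc) he), if_pos he]
    · have hne : ¬ Even r := Nat.not_even_iff_odd.mpr ho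
      rw [if_pos (Nat.even_add_one.mpr hne), if_neg hne]

lemma cseq_word (x y : Fin n) : ∀ r, ∃ l : List (Fin n),
    l.length = r ∧ (l.map K.s).prod = K.cseq x y r := by
  intro r
  induction r with
  | zero => exact ⟨[], rfl, by simp [cseq_zero]⟩
  | succ r ih =>
    obtain ⟨l, hl, hp⟩ := ih
    exact ⟨(if Even r then x else y) :: l, by simp [hl], by
      simp only [List.map_cons, List.prod_cons, hp, cseq_succ, apply_ite K.s]⟩

lemma cseq_mem (x y : Fin n) (r : ℕ) : K.cseq x y r ∈ K.Wgrp := by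
  obtain ⟨l, _, hp⟩ := K.cseq_word x y r
  exact hp ▸ K.word_mem l

lemma len_cseq_le (x y : Fin n) (r : ℕ) : K.len (K.cseq x y r) ≤ r := by
  obtain ⟨l, hl, hp⟩ := K.cseq_word x y r
  exact le_trans (K.len_le l hp) (le_of_eq hl)

end KacMoody

-- useq: coefficient sequences
def useq (a b : ℤ) : ℕ → ℤ × ℤ
  | 0 => (1, 0)
  | (r + 1) =>
    if Even r then ((useq a b r).1, b * (useq a b r).1 - (useq a b r).2)
    else (a * (useq a b r).2 - (useq a b r).1, (useq a b r).2)

namespace KacMoody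

variable {n : ℕ} {V : Type} [AddCommGroup V] (K : KacMoody n V)

lemma cseq_alpha (i t : Fin n) : ∀ r,
    K.cseq t i r (K.alpha i)
      = (useq (-(K.pair i (K.alpha t))) (-(K.pair t (K.alpha i))) r).1 • K.alpha i
        + (useq (-(K.pair i (K.alpha t))) (-(K.pair t (K.alpha i))) r).2 • K.alpha t := by
  intro r
  induction r with
  | zero => simp [cseq_zero, useq, one_aut_apply]
  | succ r ih =>
    rw [cseq_succ, mul_aut_apply, ih]
    rcases Nat.even_or_odd r with he | ho
    · rw [if_pos he]
      show K.s t _ = _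
      rw [s_apply]
      simp only [useq, if_pos he, map_add, map_zsmul, K.pair_self, smul_eq_mul]
      module
    · have hne : ¬ Even r := Nat.not_even_iff_odd.mpr ho
      rw [if_neg hne]
      show K.s i _ = _
      rw [s_apply]
      simp only [useq, if_neg hne, map_add, map_zsmul, K.pair_self, smul_eq_mul]
      module

end KacMoody

-- positivity of useq coefficients
lemma useq_pos_big {a b : ℤ} (ha : 0 ≤ a) (hb : 0 ≤ b) (h4 : 4 ≤ a * b) :
    ∀ r, 0 ≤ (useq a b r).1 ∧ 0 ≤ (useq a b r).2 := by
  have key : ∀ r, (0 ≤ (useq a b r).1 ∧ 0 ≤ (useq a b r).2) ∧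
      (Even r → a * (useq a b r).2 ≤ 2 * (useq a b r).1) ∧
      (¬ Even r → b * (useq a b r).1 ≤ 2 * (useq a b r).2) := by
    intro r
    induction r with
    | zero => refine ⟨⟨by norm_num [useq], by norm_num [useq]⟩, ?_, ?_⟩ <;> simp [useq]
    | succ r ih =>
      obtain ⟨⟨hA, hB⟩, hev, hod⟩ := ih
      rcases Nat.even_or_odd r with he | ho
      · have h1 := hev he
        have h2 : b * (a * (useq a b r).2) ≤ b * (2 * (useq a b r).1) :=
          mul_le_mul_of_nonneg_left h1 hb
        have h3 : 4 * (useq a b r).2 ≤ a * b * (useq a b r).2 :=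
          mul_le_mul_of_nonneg_right h4 hB
        have hne : ¬ Even (r + 1) := fun hc => (Nat.even_add_one.mp hc) he
        refine ⟨⟨?_, ?_⟩, fun hh => absurd hh hne, fun _ => ?_⟩ <;>
          simp only [useq, if_pos he] <;> nlinarith
      · have hne : ¬ Even r := Nat.not_even_iff_odd.mpr ho
        have h1 := hod hne
        have h2 : a * (b * (useq a b r).1) ≤ a * (2 * (useq a b r).2) :=
          mul_le_mul_of_nonneg_left h1 ha
        have h3 : 4 * (useq a b r).1 ≤ a * b * (useq a b r).1 :=
          mul_le_mul_of_nonneg_right h4 hA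
        have hev1 : Even (r + 1) := Nat.even_add_one.mpr hne
        refine ⟨⟨?_, ?_⟩, fun _ => ?_, fun hh => absurd hev1 hh⟩ <;>
          simp only [useq, if_neg hne] <;> nlinarith
  exact fun r => (key r).1

lemma useq_pos_0 {a b : ℤ} (hb : 0 ≤ b) :
    ∀ r, r < 2 → 0 ≤ (useq a b r).1 ∧ 0 ≤ (useq a b r).2 := by
  intro r hr
  interval_cases r <;> constructor <;> norm_num [useq, Nat.even_iff] <;> linarith

lemma pin_ab {a b : ℤ} (ha : 0 ≤ a) (hb : 0 ≤ b) {k : ℤ} (h : a * b = k)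
    (hk1 : 1 ≤ k) (hk3 : k ≤ 3) : 1 ≤ a ∧ a ≤ 3 ∧ 1 ≤ b ∧ b ≤ 3 := by
  have hb0 : b ≠ 0 := fun hb0 => by rw [hb0, mul_zero] at h; omega
  have ha0 : a ≠ 0 := fun ha0 => by rw [ha0, zero_mul] at h; omega
  have hb1 : 1 ≤ b := by omega
  have ha1 : 1 ≤ a := by omega
  have h2 : a * 1 ≤ a * b := mul_le_mul_of_nonneg_left hb1 ha
  have h3 : 1 * b ≤ a * b := mul_le_mul_of_nonneg_right ha1 hb
  constructor; · exact ha1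
  constructor; · nlinarith
  constructor; · exact hb1
  nlinarith

lemma useq_pos_1 {a b : ℤ} (ha : 0 ≤ a) (hb : 0 ≤ b) (h : a * b = 1) :
    ∀ r, r < 3 → 0 ≤ (useq a b r).1 ∧ 0 ≤ (useq a b r).2 := by
  intro r hr
  obtain ⟨ha1, ha3, hb1, hb3⟩ := pin_ab ha hb h (by norm_num) (by norm_num)
  interval_cases a <;> interval_cases b <;> first
    | omega
    | (interval_cases r <;> constructor <;> norm_num [useq, Nat.even_iff])

lemma useq_pos_2 {a b : ℤ} (ha : 0 ≤ a) (hb : 0 ≤ b) (h : a * b = 2) :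
    ∀ r, r < 4 → 0 ≤ (useq a b r).1 ∧ 0 ≤ (useq a b r).2 := by
  intro r hr
  obtain ⟨ha1, ha3, hb1, hb3⟩ := pin_ab ha hb h (by norm_num) (by norm_num)
  interval_cases a <;> interval_cases b <;> first
    | omega
    | (interval_cases r <;> constructor <;> norm_num [useq, Nat.even_iff])

lemma useq_pos_3 {a b : ℤ} (ha : 0 ≤ a) (hb : 0 ≤ b) (h : a * b = 3) :
    ∀ r, r < 6 → 0 ≤ (useq a b r).1 ∧ 0 ≤ (useq a b r).2 := by
  intro r hr
  obtain ⟨ha1, ha3, hb1, hb3⟩ := pin_ab ha hb h (by norm_num) (by norm_num)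
  interval_cases a <;> interval_cases b <;> first
    | omega
    | (interval_cases r <;> constructor <;> norm_num [useq, Nat.even_iff])


-- braid relation machinery: 4-parameter symbolic states
def TIm (p : ℤ) (P : ℤ × ℤ × ℤ × ℤ) : ℤ × ℤ × ℤ × ℤ :=
  (-1 - P.1 - p * P.2.2.1, -P.2.1 - p * P.2.2.2, P.2.2.1, P.2.2.2)

def TTm (q : ℤ) (P : ℤ × ℤ × ℤ × ℤ) : ℤ × ℤ × ℤ × ℤ :=
  (P.1, P.2.1, -P.2.2.1 - q * P.1, -1 - P.2.2.2 - q * P.2.1)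

def parsT (p q : ℤ) : ℕ → ℤ × ℤ × ℤ × ℤ
  | 0 => (0, 0, 0, 0)
  | (r + 1) => if Even r then TTm q (parsT p q r) else TIm p (parsT p q r)

def parsI (p q : ℤ) : ℕ → ℤ × ℤ × ℤ × ℤ
  | 0 => (0, 0, 0, 0)
  | (r + 1) => if Even r then TIm p (parsI p q r) else TTm q (parsI p q r)

lemma parsT_succ (p q : ℤ) (r : ℕ) :
    parsT p q (r + 1) = if Even r then TTm q (parsT p q r) else TIm p (parsT p q r) := rfl

lemma parsI_succ (p q : ℤ) (r : ℕ) :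
    parsI p q (r + 1) = if Even r then TIm p (parsI p q r) else TTm q (parsI p q r) := rfl

namespace KacMoody

variable {n : ℕ} {V : Type} [AddCommGroup V] (K : KacMoody n V)

def Fm (i t : Fin n) (P : ℤ × ℤ × ℤ × ℤ) (v : V) : V :=
  v + (P.1 * K.pair i v + P.2.1 * K.pair t v) • K.alpha i
    + (P.2.2.1 * K.pair i v + P.2.2.2 * K.pair t v) • K.alpha t

lemma s_Fm_i (i t : Fin n) (P : ℤ × ℤ × ℤ × ℤ) (v : V) :
    K.s i (K.Fm i t P v) = K.Fm i t (TIm (K.pair i (K.alpha t)) P) v := by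
  rw [s_apply]
  simp only [Fm, TIm, map_add, map_zsmul, K.pair_self, smul_eq_mul]
  module

lemma s_Fm_t (i t : Fin n) (P : ℤ × ℤ × ℤ × ℤ) (v : V) :
    K.s t (K.Fm i t P v) = K.Fm i t (TTm (K.pair t (K.alpha i)) P) v := by
  rw [s_apply]
  simp only [Fm, TTm, map_add, map_zsmul, K.pair_self, smul_eq_mul]
  module

lemma cseq_ti_Fm (i t : Fin n) : ∀ r (v : V),
    K.cseq t i r v = K.Fm i t (parsT (K.pair i (K.alpha t)) (K.pair t (K.alpha i)) r) v := by
  intro r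
  induction r with
  | zero => intro v; show v = _; simp [Fm, parsT]
  | succ r ih =>
    intro v
    rw [cseq_succ, mul_aut_apply, ih v, parsT_succ]
    rcases Nat.even_or_odd r with he | ho
    · rw [if_pos he, if_pos he]; exact K.s_Fm_t i t _ v
    · have hne : ¬ Even r := Nat.not_even_iff_odd.mpr ho
      rw [if_neg hne, if_neg hne]; exact K.s_Fm_i i t _ v

lemma cseq_it_Fm (i t : Fin n) : ∀ r (v : V),
    K.cseq i t r v = K.Fm i t (parsI (K.pair i (K.alpha t)) (K.pair t (K.alpha i)) r) v := by
  intro r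
  induction r with
  | zero => intro v; show v = _; simp [Fm, parsI]
  | succ r ih =>
    intro v
    rw [cseq_succ, mul_aut_apply, ih v, parsI_succ]
    rcases Nat.even_or_odd r with he | ho
    · rw [if_pos he, if_pos he]; exact K.s_Fm_i i t _ v
    · have hne : ¬ Even r := Nat.not_even_iff_odd.mpr ho
      rw [if_neg hne, if_neg hne]; exact K.s_Fm_t i t _ v

lemma braid_of_pars {i t : Fin n} {M : ℕ}
    (h : parsT (K.pair i (K.alpha t)) (K.pair t (K.alpha i)) M
       = parsI (K.pair i (K.alpha t)) (K.pair t (K.alpha i)) M) :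
    K.cseq t i M = K.cseq i t M := by
  apply AddEquiv.ext
  intro v
  rw [K.cseq_ti_Fm i t M v, K.cseq_it_Fm i t M v, h]

lemma pars_eq_2 {p q : ℤ} (hp : p = 0) (hq : q = 0) : parsT p q 2 = parsI p q 2 := by
  subst hp; subst hq
  norm_num [parsT, parsI, TIm, TTm, Nat.even_iff]

lemma pars_eq_3 {p q : ℤ} (h : p * q = 1) : parsT p q 3 = parsI p q 3 := by
  refine Prod.ext_iff.mpr ⟨?_, Prod.ext_iff.mpr ⟨?_, Prod.ext_iff.mpr ⟨?_, ?_⟩⟩⟩ <;>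
      norm_num [parsT, parsI, TIm, TTm, Nat.even_iff] <;>
    first
      | linear_combination h
      | linear_combination -h
      | linear_combination p * h
      | linear_combination -(p * h)
      | linear_combination q * h
      | linear_combination -(q * h)
      | linear_combination (p * q) * h
      | linear_combination 2 * h
      | linear_combination (p ^ 2 * q - p) * h
      | linear_combination (q - p * q ^ 2) * h
      | linear_combination (p * q ^ 2 - q) * h
      | linear_combination (p - p ^ 2 * q) * h

lemma pars_eq_4 {p q : ℤ} (h : p * q = 2) : parsT p q 4 = parsI p q 4 := by
  refine Prod.ext_iff.mpr ⟨?_, Prod.ext_iff.mpr ⟨?_, Prod.ext_iff.mpr ⟨?_, ?_⟩⟩⟩ <;>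
      norm_num [parsT, parsI, TIm, TTm, Nat.even_iff] <;>
    first
      | linear_combination h
      | linear_combination -h
      | linear_combination p * h
      | linear_combination -(p * h)
      | linear_combination q * h
      | linear_combination -(q * h)
      | linear_combination (p * q) * h
      | linear_combination 2 * h
      | linear_combination (p ^ 2 * q - p) * h
      | linear_combination (q - p * q ^ 2) * h
      | linear_combination (p * q ^ 2 - q) * h
      | linear_combination (p - p ^ 2 * q) * h

lemma pars_eq_6 {p q : ℤ} (h : p * q = 3) : parsT p q 6 = parsI p q 6 := by
  refine Prod.ext_iff.mpr ⟨?_, Prod.ext_iff.mpr ⟨?_, Prod.ext_iff.mpr ⟨?_, ?_⟩⟩⟩ <;>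
      norm_num [parsT, parsI, TIm, TTm, Nat.even_iff] <;>
    first
      | linear_combination h
      | linear_combination -h
      | linear_combination p * h
      | linear_combination -(p * h)
      | linear_combination q * h
      | linear_combination -(q * h)
      | linear_combination (p * q) * h
      | linear_combination 2 * h
      | linear_combination (p ^ 2 * q - p) * h
      | linear_combination (q - p * q ^ 2) * h
      | linear_combination (p * q ^ 2 - q) * h
      | linear_combination (p - p ^ 2 * q) * h
      | linear_combination (p ^ 2 * q ^ 2 + p * q) * h
      | linear_combination (p * q - 3) * h
      | linear_combination (3 - p * q) * h

end KacMoody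


namespace KacMoody

variable {n : ℕ} {V : Type} [AddCommGroup V] (K : KacMoody n V)

/-- The "descent walk": the inner induction of the positivity theorem. -/
lemma walk_aux (w : AddAut V) (i t : Fin n) (M : ℕ) (hM : 2 ≤ M)
    (hpos : ∀ r, r < M →
      0 ≤ (useq (-(K.pair i (K.alpha t))) (-(K.pair t (K.alpha i))) r).1 ∧
      0 ≤ (useq (-(K.pair i (K.alpha t))) (-(K.pair t (K.alpha i))) r).2)
    (hbraid : K.cseq t i M = K.cseq i t M ∨ K.len w + 2 ≤ M)
    (hni : ¬ K.len (w * K.s i) < K.len w)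
    (ih : ∀ v, v ∈ K.Wgrp → K.len v < K.len w → ∀ j,
      ¬ K.len (v * K.s j) < K.len v → v (K.alpha j) ∈ K.QP) :
    ∀ Q (r : ℕ) (wr : AddAut V), wr ∈ K.Wgrp → 1 ≤ r → r ≤ M → K.len wr = Q →
      K.len wr + r = K.len w → wr * K.cseq t i r = w → w (K.alpha i) ∈ K.QP := by
  intro Q
  induction Q using Nat.strong_induction_on with
  | _ Q IH =>
    intro r wr hwr hr1 hrM hlenQ hGood hprod
    by_cases hreach : r = M
    · -- reached the braid bound: contradiction
      exfalso
      rw [hreach] at hprod hGood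
      rcases hbraid with hb | hb
      · -- braid relation gives a short word for w * s i
        obtain ⟨m', hm'⟩ : ∃ m', M = m' + 1 := ⟨M - 1, by omega⟩
        have hstrip : K.cseq i t M = K.cseq t i m' * K.s i := by
          rw [hm']; exact K.cseq_strip i t m'
        have hws : w * K.s i = wr * K.cseq t i m' := by
          rw [← hprod, mul_assoc, hb, hstrip, mul_assoc, K.s_mul_self, mul_one]
        have hlen : K.len (w * K.s i) ≤ K.len wr + m' := by
          rw [hws]
          exact le_trans (K.len_mul_le hwr (K.cseq_mem t i m')) (by
            have := K.len_cseq_le t i m'; omega)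
        omega
      · omega
    · have hrM' : r < M := by omega
      set χ : Fin n := if Even r then t else i with hχ
      have hsχ : (if Even r then K.s t else K.s i) = K.s χ := by
        rw [hχ, apply_ite K.s]
      by_cases hc : K.len (wr * K.s χ) < K.len wr
      · -- continue the walk
        have hmem : wr * K.s χ ∈ K.Wgrp := mul_mem hwr (K.s_mem χ)
        have hup : K.len wr ≤ K.len (wr * K.s χ) + 1 := K.len_le_len_mul_s_add_one hwr χ
        have hQ' : K.len (wr * K.s χ) = Q - 1 ∧ 1 ≤ Q := by omega
        refine IH (Q - 1) (by omega) (r + 1) (wr * K.s χ) hmem (by omega) (by omega)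
          hQ'.1 (by omega) ?_
        rw [cseq_succ, hsχ, ← mul_assoc, mul_assoc wr, K.s_mul_self, mul_one, hprod]
      · -- stop: both directions go up
        have hmemr : wr ∈ K.Wgrp := hwr
        have hlt : K.len wr < K.len w := by omega
        have h1 : wr (K.alpha χ) ∈ K.QP := ih wr hmemr hlt χ hc
        -- the other letter
        set χ' : Fin n := if Even r then i else t with hχ'
        obtain ⟨r', hr'⟩ : ∃ r', r = r' + 1 := ⟨r - 1, by omega⟩
        have hsχ' : (if Even r' then K.s t else K.s i) = K.s χ' := by
          rcases Nat.even_or_odd r' with he | ho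
          · have : ¬ Even r := by rw [hr']; exact fun hc' => (Nat.even_add_one.mp hc') he
            rw [if_pos he, hχ', if_neg this]
          · have hne : ¬ Even r' := Nat.not_even_iff_odd.mpr ho
            have : Even r := by rw [hr']; exact Nat.even_add_one.mpr hne
            rw [if_neg hne, hχ', if_pos this]
        have hprod' : (wr * K.s χ') * K.cseq t i r' = w := by
          rw [← hprod, hr', cseq_succ, hsχ', mul_assoc]
        have hlow : K.len w ≤ K.len (wr * K.s χ') + r' := by
          calc K.len w = K.len ((wr * K.s χ') * K.cseq t i r') := by rw [hprod']
            _ ≤ K.len (wr * K.s χ') + K.len (K.cseq t i r') :=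
                K.len_mul_le (mul_mem hwr (K.s_mem χ')) (K.cseq_mem t i r')
            _ ≤ K.len (wr * K.s χ') + r' := by have := K.len_cseq_le t i r'; omega
        have hc' : ¬ K.len (wr * K.s χ') < K.len wr := by omega
        have h2 : wr (K.alpha χ') ∈ K.QP := ih wr hmemr hlt χ' hc'
        have hit : wr (K.alpha i) ∈ K.QP ∧ wr (K.alpha t) ∈ K.QP := by
          rcases Nat.even_or_odd r with he | ho
          · rw [hχ, if_pos he] at h1; rw [hχ', if_pos he] at h2; exact ⟨h2, h1⟩
          · have hne : ¬ Even r := Nat.not_even_iff_odd.mpr ho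
            rw [hχ, if_neg hne] at h1; rw [hχ', if_neg hne] at h2; exact ⟨h1, h2⟩
        have hw : w (K.alpha i) = wr (K.cseq t i r (K.alpha i)) := by
          rw [← hprod, mul_aut_apply]
        rw [hw, K.cseq_alpha i t r, map_add, map_zsmul, map_zsmul]
        exact K.qp_combo hit.1 hit.2 (hpos r hrM').1 (hpos r hrM').2

/-- Positivity: if `ℓ(w s_i)` does not go down, then `w α_i ∈ Q⁺`. -/
theorem pos_of_not_lt : ∀ N (w : AddAut V), w ∈ K.Wgrp → K.len w ≤ N → ∀ i,
    ¬ K.len (w * K.s i) < K.len w → w (K.alpha i) ∈ K.QP := by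
  intro N
  induction N with
  | zero =>
    intro w hw hlen i _
    have : w = 1 := K.eq_one_of_len_zero hw (by omega)
    rw [this, one_aut_apply]
    exact K.qp_alpha i
  | succ N ihN =>
    intro w hw hlen i hni
    by_cases hN : K.len w ≤ N
    · exact ihN w hw hN i hni
    · have hlw : K.len w = N + 1 := by omega
      -- get the last letter of a minimal word
      obtain ⟨l, hlL, hlP⟩ := K.len_spec hw
      have hlne : l ≠ [] := by
        intro h; rw [h] at hlL; simp at hlL; omega
      set t : Fin n := l.getLast hlne with ht
      have hsplit : l.dropLast ++ [t] = l := List.dropLast_append_getLast hlne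
      have hwt : w * K.s t = (l.dropLast.map K.s).prod := by
        have : w = (l.dropLast.map K.s).prod * K.s t := by
          rw [← hlP, ← hsplit]; simp
        rw [this, mul_assoc, K.s_mul_self, mul_one]
      have hltw : K.len (w * K.s t) < K.len w := by
        have h1 : K.len (w * K.s t) ≤ l.dropLast.length := K.len_le _ hwt.symm
        have h2 : l.dropLast.length + 1 = l.length := by
          rw [← hsplit]; simp
        omega
      have hit : i ≠ t := by
        intro h; rw [h] at hni; exact hni hltw
      -- parameters
      set p : ℤ := K.pair i (K.alpha t) with hp
      set q : ℤ := K.pair t (K.alpha i) with hq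
      have hp0 : p ≤ 0 := K.pair_offdiag i t hit
      have hq0 : q ≤ 0 := K.pair_offdiag t i (Ne.symm hit)
      have hpq0 : 0 ≤ p * q := by nlinarith
      have ha : 0 ≤ -p := by omega
      have hb : 0 ≤ -q := by omega
      have ihw : ∀ v, v ∈ K.Wgrp → K.len v < K.len w → ∀ j,
          ¬ K.len (v * K.s j) < K.len v → v (K.alpha j) ∈ K.QP := by
        intro v hv hvlen j hj
        exact ihN v hv (by omega) j hj
      have hstart : ∀ M, 2 ≤ M →
          (∀ r, r < M → 0 ≤ (useq (-p) (-q) r).1 ∧ 0 ≤ (useq (-p) (-q) r).2) →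
          (K.cseq t i M = K.cseq i t M ∨ K.len w + 2 ≤ M) →
          w (K.alpha i) ∈ K.QP := by
        intro M hM hposM hbraidM
        refine K.walk_aux w i t M hM hposM hbraidM hni ihw
          (K.len (w * K.s t)) 1 (w * K.s t) (mul_mem hw (K.s_mem t)) le_rfl (by omega)
          rfl ?_ ?_
        · have := K.len_le_len_mul_s_add_one hw t
          omega
        · rw [cseq_one, mul_assoc, K.s_mul_self, mul_one]
      -- case analysis on p * q
      by_cases h0 : p * q = 0
      · have hpz : p = 0 ∧ q = 0 := by
          rcases mul_eq_zero.mp h0 with h | h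
          · exact ⟨h, K.pair_zero_iff i t h⟩
          · exact ⟨K.pair_zero_iff t i h, h⟩
        exact hstart 2 le_rfl (fun r hr => useq_pos_0 hb r hr)
          (Or.inl (K.braid_of_pars (pars_eq_2 hpz.1 hpz.2)))
      by_cases h1 : p * q = 1
      · exact hstart 3 (by omega) (fun r hr => useq_pos_1 ha hb (by linear_combination h1) r hr)
          (Or.inl (K.braid_of_pars (pars_eq_3 h1)))
      by_cases h2 : p * q = 2
      · exact hstart 4 (by omega) (fun r hr => useq_pos_2 ha hb (by linear_combination h2) r hr)
          (Or.inl (K.braid_of_pars (pars_eq_4 h2)))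
      by_cases h3 : p * q = 3
      · exact hstart 6 (by omega) (fun r hr => useq_pos_3 ha hb (by linear_combination h3) r hr)
          (Or.inl (K.braid_of_pars (pars_eq_6 h3)))
      · have h4 : 4 ≤ (-p) * (-q) := by
          have hr : (-p) * (-q) = p * q := by ring
          rw [hr]
          obtain ⟨z, hz⟩ : ∃ z, p * q = z := ⟨_, rfl⟩
          rw [hz] at hpq0 h0 h1 h2 h3 ⊢
          omega
        exact hstart (K.len w + 2) (by omega)
          (fun r _ => useq_pos_big ha hb h4 r) (Or.inr le_rfl)

theorem pos_root (w : AddAut V) (hw : w ∈ K.Wgrp) (i : Fin n)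
    (h : K.len (w * K.s i) = K.len w + 1) :
    w (K.alpha i) ∈ K.QP ∧ w (K.alpha i) ≠ 0 := by
  constructor
  · exact K.pos_of_not_lt (K.len w) w hw le_rfl i (by omega)
  · intro hz
    have : K.alpha i = 0 := by
      have := congrArg w.symm hz
      simpa using this
    exact K.alpha_ne_zero i this

end KacMoody


namespace KacMoody

variable {n : ℕ} {V : Type} [AddCommGroup V] (K : KacMoody n V)

lemma s_alpha_self (i : Fin n) : K.s i (K.alpha i) = -K.alpha i := by
  rw [s_apply, K.pair_self]
  module

end KacMoody



open KacMoody in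
/-- **Lemma (behaviour of `m(𝔭, w)` under `φ_i`).**
Let `λ ∈ Q⁻`, `𝔭 ∈ 𝒫(-λ)`, `i ∈ I` and `w ∈ W` with `ℓ(w s_i) = ℓ(w) + 1`.
Then `m(φ_i(𝔭), w) = m(𝔭, w s_i) + 1`. -/
theorem mpw_phi
    (n : ℕ) (V : Type) [AddCommGroup V] (K : KacMoody n V) :
    ∀ lam : V, -lam ∈ K.QP →
      ∀ p : Finset (V × ℕ), K.IsPart (-lam) p →
        ∀ (i : Fin n), ∀ w ∈ K.Wgrp, K.len (w * K.s i) = K.len w + 1 →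
          K.mpw w (K.phi i p) = K.mpw (w * K.s i) p + 1 := by

  intro lam _ p hp i w hw hlen
  obtain ⟨hQP, hα0⟩ := K.pos_root w hw i hlen
  -- basic facts
  have hnQP : -(w (K.alpha i)) ∉ K.QP := fun hc =>
    hα0 (K.eq_zero_of_qp_neg_qp hQP hc)
  set f : V × ℕ → V × ℕ := fun x => (K.s i x.1, x.2) with hf
  have hfinj : Function.Injective f := by
    intro x y hxy
    obtain ⟨h1, h2⟩ := Prod.mk.injEq .. ▸ hxy
    exact Prod.ext ((K.s i).injective h1) h2
  set P : V × ℕ → Prop := fun x => -(w x.1) ∈ K.QP ∧ w x.1 ≠ 0 with hP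
  set P' : V × ℕ → Prop := fun x => -((w * K.s i) x.1) ∈ K.QP ∧ (w * K.s i) x.1 ≠ 0 with hP'
  have hPf : ∀ x, P (f x) ↔ P' x := by
    intro x
    rw [hP, hP']
    simp only [hf, mul_aut_apply]
  have hwsi : (w * K.s i) (K.alpha i) = -(w (K.alpha i)) := by
    rw [mul_aut_apply, K.s_alpha_self, map_neg]
  have hPtop : P' (K.alpha i, 1) := by
    rw [hP']
    constructor
    · show -((w * K.s i) (K.alpha i)) ∈ K.QP
      rw [hwsi, neg_neg]; exact hQP
    · show (w * K.s i) (K.alpha i) ≠ 0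
      rw [hwsi]; simpa using hα0
  have hPnottop : ¬ P (K.alpha i, 1) := by
    rw [hP]
    rintro ⟨hc, -⟩
    exact hnQP hc
  by_cases h : ∃ x ∈ p, x.1 = K.alpha i
  · -- case A : α_i occurs in p
    obtain ⟨x0, hx0p, hx0⟩ := h
    have hx0eq : x0 = (K.alpha i, 1) := by
      have h2 := (hp.1 x0 hx0p).2
      rw [hx0] at h2
      rw [K.mult_simple i] at h2
      have : x0.2 = 1 := by omega
      exact Prod.ext hx0 this
    rw [hx0eq] at hx0p
    set p' := p.erase (K.alpha i, 1) with hp'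
    have hcard : p'.card + 1 = p.card := Finset.card_erase_add_one hx0p
    have hinsert : insert (K.alpha i, 1) p' = p := Finset.insert_erase hx0p
    have hnmem : (K.alpha i, 1) ∉ p' := Finset.notMem_erase _ _
    have huniq : ∀ y ∈ p, y.1 = K.alpha i → y = (K.alpha i, 1) := by
      intro y hy hy1
      have h2 := (hp.1 y hy).2
      rw [hy1] at h2
      rw [K.mult_simple i] at h2
      exact Prod.ext hy1 (by omega)
    have hfilter : p.filter (fun x => x.1 ≠ K.alpha i) = p' := by
      ext y
      simp only [Finset.mem_filter, hp', Finset.mem_erase]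
      constructor
      · rintro ⟨hyp, hne⟩
        exact ⟨fun hc => hne (by rw [hc]), hyp⟩
      · rintro ⟨hne, hyp⟩
        exact ⟨hyp, fun hc => hne (huniq y hyp hc)⟩
    have hphi : K.phi i p = p'.image f := by
      rw [phi, if_pos ⟨(K.alpha i, 1), hx0p, rfl⟩, hfilter]
    -- counting
    have hc1 : (K.phi i p).card = p'.card := by
      rw [hphi, Finset.card_image_of_injective _ hfinj]
    have hc2 : ((K.phi i p).filter P).card = (p'.filter P').card := by
      rw [hphi, Finset.filter_image]
      rw [Finset.card_image_of_injective _ hfinj]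
      congr 1
    have hc3 : (p.filter P').card = (p'.filter P').card + 1 := by
      rw [← hinsert, Finset.filter_insert, if_pos hPtop,
        Finset.card_insert_of_notMem (fun hc => hnmem (Finset.mem_of_mem_filter _ hc))]
    rw [mpw, mpw, hc1, hc2, hc3, ← hcard]
    push_cast
    ring
  · -- case B : α_i does not occur in p
    have hphi : K.phi i p = insert (K.alpha i, 1) (p.image f) := by
      rw [phi, if_neg h]
    have hnmem : (K.alpha i, 1) ∉ p.image f := by
      intro hc
      obtain ⟨x, hxp, hxeq⟩ := Finset.mem_image.mp hc
      have h1 : K.s i x.1 = K.alpha i := congrArg Prod.fst hxeq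
      have h2 : x.1 = -K.alpha i := by
        have := congrArg (K.s i) h1
        rw [K.s_s, K.s_alpha_self] at this
        exact this
      have hx1 : x.1 ∈ K.QP := (hp.1 x hxp).1.2.2
      have hx10 : x.1 ≠ 0 := (hp.1 x hxp).1.2.1
      apply hx10
      apply K.eq_zero_of_qp_neg_qp hx1
      rw [h2, neg_neg]
      exact K.qp_alpha i
    have hc1 : (K.phi i p).card = p.card + 1 := by
      rw [hphi, Finset.card_insert_of_notMem hnmem,
        Finset.card_image_of_injective _ hfinj]
    have hc2 : ((K.phi i p).filter P).card = (p.filter P').card := by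
      rw [hphi, Finset.filter_insert, if_neg hPnottop, Finset.filter_image,
        Finset.card_image_of_injective _ hfinj]
      congr 1
    rw [mpw, mpw, hc1, hc2]
    push_cast
    ring
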